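/- For positive integers m, n, p, c with m ≥ pn and c + pn > m, the number of lattice paths from (0,0) to (m−pn, m+n) using steps (1,1) and (−p,1) that never contain a point on the line x = c equals the number of monotone lattice paths from (0,0) to (n,m) using steps (1,0) and (0,1) that stay strictly above the line y = px − (c+pn−m). -/

import Mathlib

open Finset

/-- A monotone lattice path from `s` to `t` using unit steps `(1,0)` and `(0,1)`. -/
def MonoPath (s t : ℤ × ℤ) (P : List (ℤ × ℤ)) : Prop :=
  P.head? = some s ∧ P.getLast? = some t ∧
  P.Chain' (fun p q => q = (p.1 + 1, p.2) ∨ q = (p.1, p.2 + 1))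

/-- Integer binomial coefficient, `0` for negative lower index. -/
def IC (x j : ℤ) : ℕ := if j < 0 then 0 else x.toNat.choose j.toNat

/-- Number of monotone lattice paths from `(a,b)` to `(m,n)` staying weakly above `y = kx - r`. -/
noncomputable def NW (k r a b m n : ℤ) : ℕ :=
  Set.ncard {P : List (ℤ × ℤ) | MonoPath (a, b) (m, n) P ∧ ∀ p ∈ P, k * p.1 - r ≤ p.2}

/-- Number of monotone lattice paths from `(a,b)` to `(m,n)` staying strictly above `y = kx - r`. -/
noncomputable def NS (k r a b m n : ℤ) : ℕ :=
  Set.ncard {P : List (ℤ × ℤ) | MonoPath (a, b) (m, n) P ∧ ∀ p ∈ P, k * p.1 - r < p.2}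

/-- A lattice path using steps `(1,1)` and `(-p,1)`. -/
def KPath (p : ℤ) (s t : ℤ × ℤ) (P : List (ℤ × ℤ)) : Prop :=
  P.head? = some s ∧ P.getLast? = some t ∧
  P.Chain' (fun u v => v = (u.1 + 1, u.2 + 1) ∨ v = (u.1 - p, u.2 + 1))

namespace Stmt13Aux

/-- The affine map sending a monotone-path point to the corresponding K-path point. -/
def g (m n p : ℤ) (q : ℤ × ℤ) : ℤ × ℤ :=
  ((m - q.2) - p * (n - q.1), (n - q.1) + (m - q.2))

/-- The inverse map (using integer division, exact on lattice points of the K-path). -/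
def hmap (m n p : ℤ) (q : ℤ × ℤ) : ℤ × ℤ :=
  (n - (q.2 - q.1) / (p + 1), m - (p * q.2 + q.1) / (p + 1))

lemma g_inj (m n p : ℤ) (hp : 1 ≤ p) : Function.Injective (g m n p) := by
  intro q q' hqq
  have h1 : (m - q.2) - p * (n - q.1) = (m - q'.2) - p * (n - q'.1) := congrArg Prod.fst hqq
  have h2 : (n - q.1) + (m - q.2) = (n - q'.1) + (m - q'.2) := congrArg Prod.snd hqq
  have hp1 : (p + 1) ≠ 0 := by omega
  have hu : (p + 1) * (n - q.1) = (p + 1) * (n - q'.1) := by linear_combination h2 - h1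
  have h3 : n - q.1 = n - q'.1 := mul_left_cancel₀ hp1 hu
  have h4 : q.1 = q'.1 := by omega
  have h5 : q.2 = q'.2 := by omega
  exact Prod.ext h4 h5

lemma g_h (m n p : ℤ) (hp : 1 ≤ p) (q : ℤ × ℤ) (hd : (p + 1) ∣ (q.2 - q.1)) :
    g m n p (hmap m n p q) = q := by
  obtain ⟨d, hd⟩ := hd
  have hp1 : (p + 1) ≠ 0 := by omega
  have e1 : (q.2 - q.1) / (p + 1) = d := by rw [hd]; exact Int.mul_ediv_cancel_left d hp1
  have e2 : (p * q.2 + q.1) / (p + 1) = q.1 + p * d := by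
    have h : p * q.2 + q.1 = (p + 1) * (q.1 + p * d) := by linear_combination p * hd
    rw [h]; exact Int.mul_ediv_cancel_left _ hp1
  unfold g hmap
  simp only [e1, e2]
  rw [Prod.ext_iff]
  constructor
  · show m - (m - (q.1 + p * d)) - p * (n - (n - d)) = q.1
    ring
  · show n - (n - d) + (m - (m - (q.1 + p * d))) = q.2
    linear_combination -hd

lemma chain_ind {α : Type*} (R : α → α → Prop) (Inv : α → Prop) :
    ∀ (P : List α), P.Chain' R →
      (∀ u v, u ∈ P → v ∈ P → R u v → Inv u → Inv v) →
      ∀ s, P.head? = some s → Inv s → ∀ q ∈ P, Inv q := by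
  intro P
  induction P with
  | nil => intro _ _ s hs; simp at hs
  | cons a l ih =>
    intro hchain hstep s hs hInv q hq
    simp only [List.head?_cons, Option.some.injEq] at hs
    subst hs
    rcases List.mem_cons.mp hq with rfl | hq
    · exact hInv
    · cases l with
      | nil => simp at hq
      | cons b l' =>
        simp only [List.Chain'] at hchain
        rw [List.isChain_cons_cons] at hchain
        exact ih hchain.2
          (fun u v hu hv => hstep u v (List.mem_cons_of_mem _ hu) (List.mem_cons_of_mem _ hv))
          b rfl (hstep a b (by simp) (by simp) hchain.1 hInv) q hq

lemma chain'_imp_mem {α : Type*} {R S : α → α → Prop} :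
    ∀ (P : List α), P.Chain' R → (∀ u v, u ∈ P → v ∈ P → R u v → S u v) → P.Chain' S := by
  intro P
  induction P with
  | nil => intro _ _; exact List.isChain_nil
  | cons a l ih =>
    intro hchain hstep
    cases l with
    | nil => exact List.isChain_singleton a
    | cons b l' =>
      simp only [List.Chain'] at hchain ⊢
      rw [List.isChain_cons_cons] at hchain ⊢
      exact ⟨hstep a b (by simp) (by simp) hchain.1,
        ih hchain.2 (fun u v hu hv =>
          hstep u v (List.mem_cons_of_mem _ hu) (List.mem_cons_of_mem _ hv))⟩

end Stmt13Aux

open Stmt13Aux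

theorem stmt13 (m n p c : ℤ) (hm : 1 ≤ m) (hn : 1 ≤ n) (hp : 1 ≤ p) (hc : 1 ≤ c)
    (h1 : p * n ≤ m) (h2 : m < c + p * n) :
    Set.ncard {P : List (ℤ × ℤ) |
        KPath p (0, 0) (m - p * n, m + n) P ∧ ∀ q ∈ P, q.1 ≠ c} =
      NS p (c + p * n - m) 0 0 n m := by
  classical
  have hGinj : Function.Injective (g m n p) := g_inj m n p hp
  set G := g m n p with hG
  set H := hmap m n p with hH
  set L : List (ℤ × ℤ) → List (ℤ × ℤ) := fun Q => (Q.map G).reverse with hL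
  have hLinj : Function.Injective L := by
    intro Q Q' hq
    have h' : Q.map G = Q'.map G := List.reverse_injective hq
    exact List.map_injective_iff.mpr hGinj h'
  have hG00 : G (0, 0) = (m - p * n, m + n) := by
    rw [hG]
    unfold g
    rw [Prod.ext_iff]
    constructor
    · show (m - (0:ℤ)) - p * (n - 0) = m - p * n
      ring
    · show (n - (0:ℤ)) + (m - 0) = m + n
      ring
  have hGnm : G (n, m) = (0, 0) := by
    rw [hG]
    unfold g
    rw [Prod.ext_iff]
    constructor
    · show (m - m) - p * (n - n) = (0:ℤ)
      ring
    · show (n - n) + (m - m) = (0:ℤ)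
      ring
  have hH00 : H (0, 0) = (n, m) := by
    apply hGinj
    exact (g_h m n p hp (0, 0) (by simp)).trans hGnm.symm
  have hHend : H (m - p * n, m + n) = (0, 0) := by
    apply hGinj
    exact (g_h m n p hp (m - p * n, m + n)
      ⟨n, by show (m + n) - (m - p * n) = (p + 1) * n; ring⟩).trans hG00.symm
  have hset : {P : List (ℤ × ℤ) |
        KPath p (0, 0) (m - p * n, m + n) P ∧ ∀ q ∈ P, q.1 ≠ c} =
      L '' {Q : List (ℤ × ℤ) | MonoPath (0, 0) (n, m) Q ∧
        ∀ q ∈ Q, p * q.1 - (c + p * n - m) < q.2} := by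
    ext P
    simp only [Set.mem_setOf_eq, Set.mem_image]
    constructor
    · rintro ⟨⟨hhead, hlast, hchain⟩, havoid⟩
      have hInv1 : ∀ q ∈ P, (p + 1) ∣ (q.2 - q.1) := by
        refine chain_ind _ (fun q : ℤ × ℤ => (p + 1) ∣ (q.2 - q.1)) P hchain ?_ (0, 0) hhead
          (by simp)
        rintro u v _ _ (rfl | rfl) ⟨d, hd⟩
        · exact ⟨d, by show (u.2 + 1) - (u.1 + 1) = (p + 1) * d; linear_combination hd⟩
        · exact ⟨d + 1, by show (u.2 + 1) - (u.1 - p) = (p + 1) * (d + 1); linear_combination hd⟩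
      have hInv2 : ∀ q ∈ P, q.1 < c := by
        refine chain_ind _ (fun q : ℤ × ℤ => q.1 < c) P hchain ?_ (0, 0) hhead (by show (0:ℤ) < c; omega)
        rintro u v _ hv (rfl | rfl) hu
        · have hne := havoid _ hv
          show u.1 + 1 < c
          have : u.1 + 1 ≠ c := hne
          omega
        · show u.1 - p < c
          omega
      have hGH : ∀ x ∈ P, G (H x) = x := fun x hx => g_h m n p hp x (hInv1 x hx)
      refine ⟨(P.map H).reverse, ⟨⟨?_, ?_, ?_⟩, ?_⟩, ?_⟩
      · rw [List.head?_reverse, List.getLast?_map, hlast, Option.map_some, hHend]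
      · rw [List.getLast?_reverse, List.head?_map, hhead, Option.map_some, hH00]
      · simp only [List.Chain']
        rw [List.isChain_reverse, List.isChain_map]
        refine chain'_imp_mem P hchain ?_
        intro u v hu hv huv
        have hu' := hGH u hu
        have hv' := hGH v hv
        have hv1 : (m - (H v).2) - p * (n - (H v).1) = v.1 := congrArg Prod.fst hv'
        have hv2 : (n - (H v).1) + (m - (H v).2) = v.2 := congrArg Prod.snd hv'
        rcases huv with h | h
        · -- v = (u.1 + 1, u.2 + 1) : monotone step is a y-step (flipped)
          have e1 : v.1 = u.1 + 1 := by rw [h]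
          have e2 : v.2 = u.2 + 1 := by rw [h]
          show H u = ((H v).1 + 1, (H v).2) ∨ H u = ((H v).1, (H v).2 + 1)
          right
          apply hGinj
          rw [hu', hG]
          unfold g
          rw [Prod.ext_iff]
          constructor
          · show u.1 = (m - ((H v).2 + 1)) - p * (n - (H v).1)
            linarith [hv1, e1]
          · show u.2 = (n - (H v).1) + (m - ((H v).2 + 1))
            linarith [hv2, e2]
        · -- v = (u.1 - p, u.2 + 1) : monotone step is an x-step (flipped)
          have e1 : v.1 = u.1 - p := by rw [h]
          have e2 : v.2 = u.2 + 1 := by rw [h]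
          show H u = ((H v).1 + 1, (H v).2) ∨ H u = ((H v).1, (H v).2 + 1)
          left
          apply hGinj
          rw [hu', hG]
          unfold g
          rw [Prod.ext_iff]
          constructor
          · show u.1 = (m - (H v).2) - p * (n - ((H v).1 + 1))
            have hx : p * (n - ((H v).1 + 1)) = p * (n - (H v).1) - p := by ring
            linarith [hv1, e1, hx]
          · show u.2 = (n - ((H v).1 + 1)) + (m - (H v).2)
            linarith [hv2, e2]
      · intro q hq
        rw [List.mem_reverse, List.mem_map] at hq
        obtain ⟨x, hx, rfl⟩ := hq
        have hg := hGH x hx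
        have hg1 : (m - (H x).2) - p * (n - (H x).1) = x.1 := congrArg Prod.fst hg
        have hlt := hInv2 x hx
        have hx2 : p * (n - (H x).1) = p * n - p * (H x).1 := by ring
        linarith
      · show ((P.map H).reverse.map G).reverse = P
        rw [← List.map_reverse, List.reverse_reverse, List.map_map]
        have hcongr : List.map (G ∘ H) P = List.map id P :=
          List.map_congr_left (fun x hx => hGH x hx)
        rw [hcongr, List.map_id]
    · rintro ⟨Q, ⟨⟨hh, hl, hch⟩, hstrict⟩, rfl⟩
      refine ⟨⟨?_, ?_, ?_⟩, ?_⟩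
      · show ((Q.map G).reverse).head? = some (0, 0)
        rw [List.head?_reverse, List.getLast?_map, hl, Option.map_some, hGnm]
      · show ((Q.map G).reverse).getLast? = some (m - p * n, m + n)
        rw [List.getLast?_reverse, List.head?_map, hh, Option.map_some, hG00]
      · show ((Q.map G).reverse).Chain' _
        simp only [List.Chain']
        rw [List.isChain_reverse, List.isChain_map]
        refine hch.imp ?_
        rintro u v (rfl | rfl)
        · -- v = (u.1 + 1, u.2) : x-step
          right
          rw [hG]
          unfold g
          rw [Prod.ext_iff]
          constructor
          · show (m - u.2) - p * (n - u.1) = ((m - u.2) - p * (n - (u.1 + 1))) - p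
            ring
          · show (n - u.1) + (m - u.2) = ((n - (u.1 + 1)) + (m - u.2)) + 1
            ring
        · -- v = (u.1, u.2 + 1) : y-step
          left
          rw [hG]
          unfold g
          rw [Prod.ext_iff]
          constructor
          · show (m - u.2) - p * (n - u.1) = ((m - (u.2 + 1)) - p * (n - u.1)) + 1
            ring
          · show (n - u.1) + (m - u.2) = ((n - u.1) + (m - (u.2 + 1))) + 1
            ring
      · intro q hq
        have hq' : q ∈ Q.map G := List.mem_reverse.mp hq
        rw [List.mem_map] at hq'
        obtain ⟨x, hx, rfl⟩ := hq'
        have hs := hstrict x hx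
        show (G x).1 ≠ c
        rw [hG]
        unfold g
        show (m - x.2) - p * (n - x.1) ≠ c
        intro heq
        have hexp : p * (n - x.1) = p * n - p * x.1 := by ring
        linarith
  rw [hset, Set.ncard_image_of_injective _ hLinj]
  rfl
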